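/- arXiv:1712.00524 — 4 statements merged into one kernel-verified Lean document; each statement's English description precedes it below -/
import Mathlib

section
/- If P is a TP2 stochastic matrix, 0 ≤ ρ < 1, and v = (I − ρP)r has decreasing elements (v(1) ≥ v(2) ≥ ⋯ ≥ v(S)), then r itself has decreasing elements. -/
def IsTP2 {S : ℕ} (A : Fin S → Fin S → ℝ) : Prop :=
  (∀ i j, 0 ≤ A i j) ∧
  ∀ i₁ i₂ j₁ j₂ : Fin S, i₁ ≤ i₂ → j₁ ≤ j₂ →
    A i₁ j₂ * A i₂ j₁ ≤ A i₁ j₁ * A i₂ j₂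

def IsStochastic {S : ℕ} (A : Fin S → Fin S → ℝ) : Prop :=
  (∀ i j, 0 ≤ A i j) ∧ ∀ i, ∑ j, A i j = 1

open Finset in
lemma aux_triangle {S : ℕ} (g : Fin S → Fin S → ℝ) (hdiag : ∀ k, g k k = 0) :
    ∑ k, ∑ l, g k l
      = ∑ k, ∑ l ∈ univ.filter (fun l => k < l), (g k l + g l k) := by
  have hsplit : ∀ k : Fin S, ∑ l, g k l =
      ∑ l ∈ univ.filter (fun l => l < k), g k l
        + ∑ l ∈ univ.filter (fun l => ¬ l < k), g k l :=
    fun k => (Finset.sum_filter_add_sum_filter_not _ _ _).symm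
  have hge : ∀ k : Fin S, ∑ l ∈ univ.filter (fun l => ¬ l < k), g k l
      = ∑ l ∈ univ.filter (fun l => k < l), g k l := by
    intro k
    rw [Finset.sum_filter, Finset.sum_filter]
    refine Finset.sum_congr rfl fun l _ => ?_
    rcases lt_trichotomy l k with h | h | h
    · simp [h, asymm h]
    · subst h; simp [hdiag]
    · simp [h, asymm h]
  have hswap : ∑ k, ∑ l ∈ univ.filter (fun l => l < k), g k l
      = ∑ k, ∑ l ∈ univ.filter (fun l => k < l), g l k := by
    refine Finset.sum_comm' ?_
    intro x y; simp
  calc ∑ k, ∑ l, g k l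
      = ∑ k, (∑ l ∈ univ.filter (fun l => l < k), g k l
          + ∑ l ∈ univ.filter (fun l => ¬ l < k), g k l) :=
        Finset.sum_congr rfl fun k _ => hsplit k
    _ = ∑ k, ∑ l ∈ univ.filter (fun l => l < k), g k l
          + ∑ k, ∑ l ∈ univ.filter (fun l => ¬ l < k), g k l := Finset.sum_add_distrib
    _ = ∑ k, ∑ l ∈ univ.filter (fun l => k < l), g l k
          + ∑ k, ∑ l ∈ univ.filter (fun l => k < l), g k l := by
        rw [hswap]; congr 1; exact Finset.sum_congr rfl fun k _ => hge k
    _ = ∑ k, ∑ l ∈ univ.filter (fun l => k < l), (g k l + g l k) := by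
        rw [← Finset.sum_add_distrib]
        refine Finset.sum_congr rfl fun k _ => ?_
        rw [← Finset.sum_add_distrib]
        exact Finset.sum_congr rfl fun l _ => add_comm _ _

/-- If `P` is TP2 stochastic, `0 ≤ ρ < 1`, and `v = (I − ρP) r` has
decreasing elements, then `r` has decreasing elements. -/
theorem r_decreasing_of_v_decreasing {S : ℕ} (P : Fin S → Fin S → ℝ)
    (r : Fin S → ℝ) (ρ : ℝ) (hρ0 : 0 ≤ ρ) (hρ1 : ρ < 1)
    (hPs : IsStochastic P) (hP : IsTP2 P)
    (hv : Antitone (fun i => r i - ρ * ∑ j, P i j * r j)) :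
    Antitone r := by
  classical
  intro a b hab
  -- the set of ordered pairs and the max gap M
  set T : Finset (Fin S × Fin S) := Finset.univ.filter (fun p => p.1 ≤ p.2) with hT
  have haT : (a, a) ∈ T := by simp [hT]
  have hne : T.Nonempty := ⟨_, haT⟩
  set M : ℝ := T.sup' hne (fun p => r p.2 - r p.1) with hM
  have hM0 : 0 ≤ M := by
    have h := Finset.le_sup' (fun p : Fin S × Fin S => r p.2 - r p.1) haT
    simp only [sub_self] at h
    exact h
  have hpair : ∀ k l : Fin S, k ≤ l → r l - r k ≤ M := by
    intro k l hkl
    have hmem : (k, l) ∈ T := by simp [hT, hkl]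
    exact Finset.le_sup' (fun p : Fin S × Fin S => r p.2 - r p.1) hmem
  -- key: P contracts the gap
  have hkey : ∀ i j : Fin S, i ≤ j →
      (∑ l, P j l * r l) - (∑ l, P i l * r l) ≤ M := by
    intro i j hij
    set g : Fin S → Fin S → ℝ := fun k l => P i k * P j l * (r l - r k) with hg
    have hdiag : ∀ k, g k k = 0 := by intro k; simp [hg]
    have hrepr : (∑ l, P j l * r l) - (∑ l, P i l * r l) = ∑ k, ∑ l, g k l := by
      have h1 : ∀ k : Fin S, ∑ l, g k l
          = P i k * (∑ l, P j l * r l) - P i k * r k := by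
        intro k
        have : ∑ l, g k l
            = P i k * (∑ l, P j l * r l) - (∑ l, P j l) * (P i k * r k) := by
          rw [Finset.mul_sum, Finset.sum_mul, ← Finset.sum_sub_distrib]
          exact Finset.sum_congr rfl fun l _ => by ring
        rw [this, hPs.2 j]; ring
      rw [Finset.sum_congr rfl fun k _ => h1 k, Finset.sum_sub_distrib,
        ← Finset.sum_mul, hPs.2 i]
      ring
    rw [hrepr, aux_triangle g hdiag]
    have hbound : ∀ k : Fin S, ∀ l ∈ Finset.univ.filter (fun l => k < l),
        g k l + g l k ≤ P i k * P j l * M := by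
      intro k l hl
      have hkl : k < l := by simpa using hl
      have htp : P i l * P j k ≤ P i k * P j l := hP.2 i j k l hij hkl.le
      have hc0 : 0 ≤ P i k * P j l - P i l * P j k := sub_nonneg.2 htp
      have h1 : g k l + g l k = (P i k * P j l - P i l * P j k) * (r l - r k) := by
        simp only [hg]; ring
      rw [h1]
      calc (P i k * P j l - P i l * P j k) * (r l - r k)
          ≤ (P i k * P j l - P i l * P j k) * M :=
            mul_le_mul_of_nonneg_left (hpair k l hkl.le) hc0
        _ ≤ P i k * P j l * M := by
            apply mul_le_mul_of_nonneg_right _ hM0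
            have := mul_nonneg (hPs.1 i l) (hPs.1 j k)
            linarith
    calc ∑ k, ∑ l ∈ Finset.univ.filter (fun l => k < l), (g k l + g l k)
        ≤ ∑ k, ∑ l ∈ Finset.univ.filter (fun l => k < l), P i k * P j l * M :=
          Finset.sum_le_sum fun k _ => Finset.sum_le_sum (hbound k)
      _ ≤ ∑ k, ∑ l, P i k * P j l * M := by
          refine Finset.sum_le_sum fun k _ => ?_
          refine Finset.sum_le_sum_of_subset_of_nonneg (Finset.filter_subset _ _) ?_
          intro l _ _
          exact mul_nonneg (mul_nonneg (hPs.1 i k) (hPs.1 j l)) hM0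
      _ = M := by
          have : ∀ k : Fin S, ∑ l, P i k * P j l * M = P i k * M := by
            intro k
            have : ∑ l, P i k * P j l * M = P i k * (∑ l, P j l) * M := by
              rw [Finset.mul_sum, Finset.sum_mul]
            rw [this, hPs.2 j, mul_one]
          rw [Finset.sum_congr rfl fun k _ => this k, ← Finset.sum_mul, hPs.2 i, one_mul]
  -- M ≤ ρ M
  obtain ⟨p, hp, hpe⟩ := Finset.exists_mem_eq_sup' hne (fun p : Fin S × Fin S => r p.2 - r p.1)
  have hple : p.1 ≤ p.2 := by simpa [hT] using hp
  have hvle := hv hple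
  simp only at hvle
  have h1 : M ≤ ρ * ((∑ l, P p.2 l * r l) - (∑ l, P p.1 l * r l)) := by
    rw [hM, hpe]
    nlinarith [hvle]
  have h2 : M ≤ ρ * M :=
    h1.trans (mul_le_mul_of_nonneg_left (hkey p.1 p.2 hple) hρ0)
  have hMle : M ≤ 0 := by nlinarith
  have := hpair a b hab
  linarith
end

section
/- If P is a TP2 stochastic matrix and v ∈ ℝ^S has decreasing elements, then Pv has decreasing elements. -/
/-- A TP2 stochastic matrix maps decreasing vectors to decreasing vectors. -/
theorem tp2_preserves_antitone {S : ℕ} (P : Fin S → Fin S → ℝ)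
    (hPs : IsStochastic P) (hP : IsTP2 P) (v : Fin S → ℝ) (hv : Antitone v) :
    Antitone (fun i => ∑ j, P i j * v j) := by
  intro i₁ i₂ h
  simp only
  have hsum₁ := hPs.2 i₁
  have hsum₂ := hPs.2 i₂
  have key : ∀ j k : Fin S,
      0 ≤ P i₁ j * P i₂ k * (v j - v k) + P i₁ k * P i₂ j * (v k - v j) := by
    intro j k
    rcases le_total j k with hjk | hjk
    · have h1 := hP.2 i₁ i₂ j k h hjk
      have h2 := hv hjk
      nlinarith
    · have h1 := hP.2 i₁ i₂ k j h hjk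
      have h2 := hv hjk
      nlinarith
  have hdouble : 0 ≤ ∑ j, ∑ k, P i₁ j * P i₂ k * (v j - v k) := by
    have h2 : 0 ≤ ∑ j, ∑ k,
        (P i₁ j * P i₂ k * (v j - v k) + P i₁ k * P i₂ j * (v k - v j)) :=
      Finset.sum_nonneg fun j _ => Finset.sum_nonneg fun k _ => key j k
    have hc : (∑ j : Fin S, ∑ k : Fin S, P i₁ k * P i₂ j * (v k - v j))
        = ∑ j : Fin S, ∑ k : Fin S, P i₁ j * P i₂ k * (v j - v k) := by
      exact Finset.sum_comm
    simp only [Finset.sum_add_distrib] at h2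
    linarith
  have expand : (∑ j : Fin S, ∑ k : Fin S, P i₁ j * P i₂ k * (v j - v k))
      = (∑ j, P i₁ j * v j) * (∑ k, P i₂ k)
        - (∑ j, P i₁ j) * (∑ k, P i₂ k * v k) := by
    rw [Finset.sum_mul_sum, Finset.sum_mul_sum, ← Finset.sum_sub_distrib]
    refine Finset.sum_congr rfl fun j _ => ?_
    rw [← Finset.sum_sub_distrib]
    exact Finset.sum_congr rfl fun k _ => by ring
  rw [expand, hsum₁, hsum₂] at hdouble
  linarith
end

section
/- The MLR order restricted to any line segment L(e₁, π̄) = {(1−γ)π̄ + γe₁ : γ ∈ [0,1]}, with π̄(1) = 0, is a total (linear) order: any two points on the segment are MLR comparable. -/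
def IsProbVec {S : ℕ} (π : Fin S → ℝ) : Prop :=
  (∀ i, 0 ≤ π i) ∧ ∑ i, π i = 1

def MLR {S : ℕ} (π₁ π₂ : Fin S → ℝ) : Prop :=
  ∀ i j : Fin S, i < j → π₁ j * π₂ i ≤ π₂ j * π₁ i

def linePt {S : ℕ} (π' : Fin (S + 1) → ℝ) (γ : ℝ) : Fin (S + 1) → ℝ :=
  fun i => γ * (if i = 0 then 1 else 0) + (1 - γ) * π' i

lemma mlr_of_le {S : ℕ} (π' : Fin (S + 1) → ℝ)
    (hπ : ∀ i, 0 ≤ π' i) (h0 : π' 0 = 0)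
    (γ₁ γ₂ : ℝ) (h₁ : γ₁ ∈ Set.Icc (0:ℝ) 1) (h₂ : γ₂ ∈ Set.Icc (0:ℝ) 1)
    (hle : γ₂ ≤ γ₁) : MLR (linePt π' γ₁) (linePt π' γ₂) := by
  intro i j hij
  have hj : j ≠ 0 := by
    intro hj; subst hj; exact absurd hij (by simp [Fin.lt_iff_val_lt_val])
  by_cases hi : i = 0
  · subst hi
    simp [linePt, hj, h0]
    have hpj := hπ j
    nlinarith [h₁.1, h₂.1, h₁.2, h₂.2]
  · simp [linePt, hi, hj]
    ring_nf
    nlinarith [hπ i, hπ j]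

/-- The MLR order restricted to a line segment `L(e₁, π̄)` with `π̄(1)=0`
is total: any two points on the segment are MLR comparable. -/
theorem mlr_total_on_line {S : ℕ} (π' : Fin (S + 1) → ℝ)
    (hπ : IsProbVec π') (h0 : π' 0 = 0)
    (γ₁ γ₂ : ℝ) (h₁ : γ₁ ∈ Set.Icc (0:ℝ) 1) (h₂ : γ₂ ∈ Set.Icc (0:ℝ) 1) :
    MLR (linePt π' γ₁) (linePt π' γ₂) ∨ MLR (linePt π' γ₂) (linePt π' γ₁) := by
  rcases le_total γ₂ γ₁ with h | h
  · exact Or.inl (mlr_of_le π' hπ.1 h0 γ₁ γ₂ h₁ h₂ h)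
  · exact Or.inr (mlr_of_le π' hπ.1 h0 γ₂ γ₁ h₂ h₁ h)
end

section
/- If the transition matrix P and observation matrix B are both TP2, then the HMM filter preserves MLR dominance: π₁ ≥_r π₂ implies T(π₁,y) ≥_r T(π₂,y) for every observation y. -/
/-- TP2 property for a rectangular kernel. -/
def IsTP2Kernel {S m : ℕ} (A : Fin S → Fin m → ℝ) : Prop :=
  (∀ i j, 0 ≤ A i j) ∧
  ∀ (i₁ i₂ : Fin S) (j₁ j₂ : Fin m), i₁ ≤ i₂ → j₁ ≤ j₂ →
    A i₁ j₂ * A i₂ j₁ ≤ A i₁ j₁ * A i₂ j₂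

/-- Normalization `σ(π,y) = 1' B_y P' π`. -/
def sigmaNorm {S m : ℕ} (P : Fin S → Fin S → ℝ) (B : Fin S → Fin m → ℝ)
    (π : Fin S → ℝ) (y : Fin m) : ℝ :=
  ∑ i, B i y * ∑ j, P j i * π j

/-- HMM filter `T(π,y) = B_y P' π / σ(π,y)`. -/
noncomputable def hmmFilter {S m : ℕ} (P : Fin S → Fin S → ℝ)
    (B : Fin S → Fin m → ℝ) (π : Fin S → ℝ) (y : Fin m) : Fin S → ℝ :=
  fun i => B i y * (∑ j, P j i * π j) / sigmaNorm P B π y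

/-- The predictor step preserves MLR when `P` is TP2. -/
lemma predictor_mlr {S : ℕ} (P : Fin S → Fin S → ℝ)
    (hP : IsTP2Kernel P) (π₁ π₂ : Fin S → ℝ) (hmlr : MLR π₁ π₂)
    {i j : Fin S} (hij : i < j) :
    (∑ a, P a j * π₁ a) * (∑ b, P b i * π₂ b) ≤
      (∑ a, P a j * π₂ a) * (∑ b, P b i * π₁ b) := by
  set f : Fin S → Fin S → ℝ := fun a b =>
    (P a j * π₂ a) * (P b i * π₁ b) - (P a j * π₁ a) * (P b i * π₂ b) with hf
  have hS : (∑ a, ∑ b, f a b) =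
      (∑ a, P a j * π₂ a) * (∑ b, P b i * π₁ b) -
        (∑ a, P a j * π₁ a) * (∑ b, P b i * π₂ b) := by
    simp [hf, Finset.sum_sub_distrib, ← Finset.mul_sum, ← Finset.sum_mul]
  have hpt : ∀ a b : Fin S, 0 ≤ f a b + f b a := by
    intro a b
    simp only [hf]
    rcases lt_trichotomy a b with h | h | h
    · have hm := hmlr a b h
      have ht := hP.2 a b i j h.le hij.le
      nlinarith [mul_nonneg (sub_nonneg.2 hm) (sub_nonneg.2 ht)]
    · subst h; nlinarith []
    · have hm := hmlr b a h
      have ht := hP.2 b a i j h.le hij.le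
      nlinarith [mul_nonneg (sub_nonneg.2 hm) (sub_nonneg.2 ht)]
  have hcomm : (∑ a, ∑ b, f a b) = ∑ a, ∑ b, f b a := Finset.sum_comm ..
  have hnn : 0 ≤ ∑ a : Fin S, ∑ b : Fin S, (f a b + f b a) :=
    Finset.sum_nonneg fun a _ => Finset.sum_nonneg fun b _ => hpt a b
  have hsplit : (∑ a : Fin S, ∑ b : Fin S, (f a b + f b a)) =
      (∑ a, ∑ b, f a b) + ∑ a, ∑ b, f b a := by
    simp [Finset.sum_add_distrib]
  have : 0 ≤ (∑ a, ∑ b, f a b) := by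
    rw [hsplit, ← hcomm] at hnn; linarith
  linarith [hS ▸ this]

/-- If `P` and `B` are TP2, the HMM filter preserves MLR dominance. -/
theorem hmm_filter_preserves_mlr {S m : ℕ}
    (P : Fin S → Fin S → ℝ) (B : Fin S → Fin m → ℝ)
    (hPst : (∀ i j, 0 ≤ P i j) ∧ ∀ i, ∑ j, P i j = 1)
    (hP : IsTP2Kernel P) (hB : IsTP2Kernel B)
    (π₁ π₂ : Fin S → ℝ) (h₁ : IsProbVec π₁) (h₂ : IsProbVec π₂)
    (hmlr : MLR π₁ π₂) (y : Fin m)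
    (hσ₁ : 0 < sigmaNorm P B π₁ y) (hσ₂ : 0 < sigmaNorm P B π₂ y) :
    MLR (hmmFilter P B π₁ y) (hmmFilter P B π₂ y) := by
  intro i j hij
  have key := predictor_mlr P hP π₁ π₂ hmlr hij
  have hBi := hB.1 i y
  have hBj := hB.1 j y
  unfold hmmFilter
  rw [div_mul_div_comm, div_mul_div_comm,
    div_le_div_iff₀ (by positivity) (by positivity)]
  nlinarith [mul_nonneg hBi hBj, mul_le_mul_of_nonneg_left key (mul_nonneg hBi hBj),
    mul_pos hσ₁ hσ₂]
end
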